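/- In any associative algebra with pairwise commuting H_l and elements S_l satisfying [S_l,H_n] = −n H_{l+n−1} and [S_l,S_n] = (l−n) S_{l+n−1}, the elements A^{(k)}_{ij} = S_i H_{j+k−1} − S_j H_{i+k−1} satisfy [A^{(k)}_{ij}, S_n] = i A^{(k)}_{i+n−1,j} + j A^{(k)}_{i,j+n−1} + (k−1) A^{(k+n−1)}_{ij} − n A^{(k+1−n)}_{i+n−1,j+n−1}, whenever all indices involved are nonnegative. -/
import Mathlib


/-- The hidden-symmetry generators `A^{(k)}_{ij} = S_i H_{j+k-1} - S_j H_{i+k-1}`. -/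
def Aop {A : Type*} [Ring A] (H S : ℕ → A) (k i j : ℕ) : A :=
  S i * H (j + k - 1) - S j * H (i + k - 1)

/-- A central element can be pulled out of a product on the left. -/
lemma cast_pull {A : Type*} [Ring A] (m : ℕ) (x y : A) :
    x * ((m : A) * y) = (m : A) * (x * y) := by
  rw [← mul_assoc, ← (Nat.cast_commute m x).eq, mul_assoc]

/-- `H 0` commutes with every `S n`, `n ≥ 1` (a consequence of the relations, via Jacobi). -/
lemma H0_comm {A : Type*} [Ring A] (H S : ℕ → A)
    (hSH : ∀ l n, 1 ≤ n → S l * H n - H n * S l = -(n : A) * H (l + n - 1))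
    (hSS : ∀ l n, 1 ≤ l + n →
      S l * S n - S n * S l = ((l : A) - (n : A)) * S (l + n - 1)) :
    ∀ n, 1 ≤ n → H 0 * S n - S n * H 0 = 0 := by
  intro n hn
  have h1 := hSH 0 1 le_rfl
  have h2 := hSS 0 n (by omega)
  have h3 := hSH n 1 le_rfl
  have h4 := hSH (n - 1) 1 le_rfl
  have h5 := hSH 0 n hn
  rw [show (0 + 1 - 1 : ℕ) = 0 from rfl] at h1
  rw [show (0 + n - 1 : ℕ) = n - 1 from by omega] at h2 h5
  rw [show (n + 1 - 1 : ℕ) = n from by omega] at h3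
  rw [show (n - 1 + 1 - 1 : ℕ) = n - 1 from by omega] at h4
  have g1 : H 1 * (((0 : A) - (n : A)) * S (n - 1))
      = ((0 : A) - (n : A)) * (H 1 * S (n - 1)) := by
    have : Commute ((0 : A) - (n : A)) (H 1) :=
      Commute.sub_left (Commute.zero_left _) (Nat.cast_commute n _)
    rw [← mul_assoc, ← this.eq, mul_assoc]
  push_cast at h1 h2 h3 h4 h5 g1
  linear_combination (norm := noncomm_ring)
    h1 * S n - S n * h1 + H 1 * h2 - h2 * H 1 + (n : A) * h4 - h3 * S 0 + S 0 * h3 - h5 + g1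

/-- The commutator of `H m` with `S n` for all `m ≥ 0`, `n ≥ 1`. -/
lemma HS_comm {A : Type*} [Ring A] (H S : ℕ → A)
    (hSH : ∀ l n, 1 ≤ n → S l * H n - H n * S l = -(n : A) * H (l + n - 1))
    (hSS : ∀ l n, 1 ≤ l + n →
      S l * S n - S n * S l = ((l : A) - (n : A)) * S (l + n - 1)) :
    ∀ m n, 1 ≤ n → H m * S n - S n * H m = (m : A) * H (m + n - 1) := by
  intro m n hn
  match m with
  | 0 =>
    simpa using H0_comm H S hSH hSS n hn
  | m + 1 =>
    have h := hSH n (m + 1) (by omega)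
    rw [show (n + (m + 1) - 1 : ℕ) = m + 1 + n - 1 from by omega] at h
    linear_combination (norm := noncomm_ring) -h

theorem A_S_commutator {A : Type*} [Ring A] (H S : ℕ → A)
    (hHH : ∀ l n, H l * H n = H n * H l)
    (hSH : ∀ l n, 1 ≤ n → S l * H n - H n * S l = -(n : A) * H (l + n - 1))
    (hSS : ∀ l n, 1 ≤ l + n →
      S l * S n - S n * S l = ((l : A) - (n : A)) * S (l + n - 1)) :
    ∀ k n i j, 1 ≤ k → 1 ≤ n → n ≤ k →
      Aop H S k i j * S n - S n * Aop H S k i j =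
        (i : A) * Aop H S k (i + n - 1) j + (j : A) * Aop H S k i (j + n - 1) +
          ((k : A) - 1) * Aop H S (k + n - 1) i j -
          (n : A) * Aop H S (k + 1 - n) (i + n - 1) (j + n - 1) := by
  intro k n i j hk hn hnk
  obtain ⟨p, rfl⟩ : ∃ p, n = p + 1 := ⟨n - 1, by omega⟩
  obtain ⟨q, rfl⟩ : ∃ q, k = p + 1 + q := ⟨k - (p + 1), by omega⟩
  simp only [Aop]
  simp only [show i + (p + 1) - 1 = i + p from by omega,
    show j + (p + 1) - 1 = j + p from by omega,
    show j + (p + 1 + q) - 1 = j + p + q from by omega,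
    show i + (p + 1 + q) - 1 = i + p + q from by omega,
    show i + p + (p + 1 + q) - 1 = i + p + p + q from by omega,
    show j + p + (p + 1 + q) - 1 = j + p + p + q from by omega,
    show p + 1 + q + (p + 1) - 1 = p + 1 + (p + q) from by omega,
    show j + (p + 1 + (p + q)) - 1 = j + p + p + q from by omega,
    show i + (p + 1 + (p + q)) - 1 = i + p + p + q from by omega,
    show p + 1 + q + 1 - (p + 1) = q + 1 from by omega,
    show j + p + (q + 1) - 1 = j + p + q from by omega,
    show i + p + (q + 1) - 1 = i + p + q from by omega]
  have f1 := HS_comm H S hSH hSS (j + p + q) (p + 1) (by omega)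
  have f2 := HS_comm H S hSH hSS (i + p + q) (p + 1) (by omega)
  rw [show j + p + q + (p + 1) - 1 = j + p + p + q from by omega] at f1
  rw [show i + p + q + (p + 1) - 1 = i + p + p + q from by omega] at f2
  have f3 := hSS i (p + 1) (by omega)
  have f4 := hSS j (p + 1) (by omega)
  rw [show i + (p + 1) - 1 = i + p from by omega] at f3
  rw [show j + (p + 1) - 1 = j + p from by omega] at f4
  have g1 := cast_pull (j + p + q) (S i) (H (j + p + p + q))
  have g2 := cast_pull (i + p + q) (S j) (H (i + p + p + q))
  push_cast at f1 f2 f3 f4 g1 g2 ⊢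
  linear_combination (norm := noncomm_ring)
    S i * f1 + f3 * H (j + p + q) - S j * f2 - f4 * H (i + p + q) + g1 - g2
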